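/- If a graph G admits a perfect matching, then Dominator has a winning strategy in both the D-game and the S-game of the Maker-Breaker domination game on G; moreover, in each game Dominator wins using at most |M| moves, where M is the perfect matching. -/
import Mathlib


open SimpleGraph

namespace MBD

variable {V : Type*}

/-- Dominator's claimed set `D` is a dominating set of `G`. -/
def Dominates (G : SimpleGraph V) (D : Finset V) : Prop :=
  ∀ v : V, ∃ d ∈ D, d = v ∨ G.Adj d v

/-- Staller's claimed set `S` contains the whole closed neighborhood of some vertex. -/
def StallerWinSet (G : SimpleGraph V) (S : Finset V) : Prop :=
  ∃ v : V, ∀ u : V, (u = v ∨ G.Adj u v) → u ∈ S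

variable [DecidableEq V]

mutual
  /-- `DomD G k D S`: with Dominator having claimed `D`, Staller `S`, and Dominator to
  move, Dominator has a strategy winning the Maker-Breaker domination game on `G`
  using at most `k` further moves of his own. -/
  inductive DomD (G : SimpleGraph V) : ℕ → Finset V → Finset V → Prop
    | win {k : ℕ} {D S : Finset V} : Dominates G D → DomD G k D S
    | move {k : ℕ} {D S : Finset V} (v : V) : v ∉ D → v ∉ S →
        DomS G k (insert v D) S → DomD G (k + 1) D S
  /-- Like `DomD`, but it is Staller's turn to move. -/
  inductive DomS (G : SimpleGraph V) : ℕ → Finset V → Finset V → Prop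
    | win {k : ℕ} {D S : Finset V} : Dominates G D → DomS G k D S
    | move {k : ℕ} {D S : Finset V} : (∃ v : V, v ∉ D ∧ v ∉ S) →
        (∀ v : V, v ∉ D → v ∉ S → DomD G k D (insert v S)) → DomS G k D S
end

mutual
  /-- `StallD G k D S`: with Dominator having claimed `D`, Staller `S`, and Dominator to
  move, Staller has a strategy winning (claiming a whole closed neighborhood) within at
  most `k` further moves of her own. -/
  inductive StallD (G : SimpleGraph V) : ℕ → Finset V → Finset V → Prop
    | win {k : ℕ} {D S : Finset V} : StallerWinSet G S → StallD G k D S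
    | move {k : ℕ} {D S : Finset V} : (∃ v : V, v ∉ D ∧ v ∉ S) →
        (∀ v : V, v ∉ D → v ∉ S → StallS G k (insert v D) S) → StallD G k D S
  /-- Like `StallD`, but it is Staller's turn to move. -/
  inductive StallS (G : SimpleGraph V) : ℕ → Finset V → Finset V → Prop
    | win {k : ℕ} {D S : Finset V} : StallerWinSet G S → StallS G k D S
    | move {k : ℕ} {D S : Finset V} (v : V) : v ∉ D → v ∉ S →
        StallD G k D (insert v S) → StallS G (k + 1) D S
end

/-- Dominator has a winning strategy in the D-game (Dominator starts). -/
def DominatorWinsD (G : SimpleGraph V) : Prop := ∃ k, DomD G k ∅ ∅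

/-- Dominator has a winning strategy in the S-game (Staller starts). -/
def DominatorWinsS (G : SimpleGraph V) : Prop := ∃ k, DomS G k ∅ ∅

/-- Staller has a winning strategy in the D-game (Dominator starts). -/
def StallerWinsD (G : SimpleGraph V) : Prop := ∃ k, StallD G k ∅ ∅

/-- Staller has a winning strategy in the S-game (Staller starts). -/
def StallerWinsS (G : SimpleGraph V) : Prop := ∃ k, StallS G k ∅ ∅

/-- Outcome `𝒟`: Dominator wins both the D-game and the S-game. -/
def outcomeD (G : SimpleGraph V) : Prop := DominatorWinsD G ∧ DominatorWinsS G

/-- Outcome `𝒮`: Staller wins both the D-game and the S-game. -/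
def outcomeS (G : SimpleGraph V) : Prop := StallerWinsD G ∧ StallerWinsS G

/-- Outcome `𝒩`: the first player wins in both games. -/
def outcomeN (G : SimpleGraph V) : Prop := DominatorWinsD G ∧ StallerWinsS G

/-- `γ_MB(G)`: the minimum number of Dominator's moves needed to win the D-game,
`∞` if he has no winning strategy. -/
noncomputable def gMB (G : SimpleGraph V) : ℕ∞ :=
  sInf ((fun k : ℕ => (k : ℕ∞)) '' {k | DomD G k ∅ ∅})

/-- `γ_MB'(G)`: the minimum number of Dominator's moves needed to win the S-game. -/
noncomputable def gMB' (G : SimpleGraph V) : ℕ∞ :=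
  sInf ((fun k : ℕ => (k : ℕ∞)) '' {k | DomS G k ∅ ∅})

/-- `γ_SMB(G)`: the minimum number of Staller's moves needed to win the D-game. -/
noncomputable def gSMB (G : SimpleGraph V) : ℕ∞ :=
  sInf ((fun k : ℕ => (k : ℕ∞)) '' {k | StallD G k ∅ ∅})

/-- `γ_SMB'(G)`: the minimum number of Staller's moves needed to win the S-game. -/
noncomputable def gSMB' (G : SimpleGraph V) : ℕ∞ :=
  sInf ((fun k : ℕ => (k : ℕ∞)) '' {k | StallS G k ∅ ∅})

end MBD

section PairingAux

variable {V : Type*} [DecidableEq V]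

/-- The set of matching edges neither of whose endpoints has been claimed by Dominator. -/
private def unres (M : Finset (V × V)) (D : Finset V) : Finset (V × V) :=
  M.filter (fun p => p.1 ∉ D ∧ p.2 ∉ D)

private lemma mem_unres {M : Finset (V × V)} {D : Finset V} {p : V × V} :
    p ∈ unres M D ↔ p ∈ M ∧ p.1 ∉ D ∧ p.2 ∉ D := by
  simp [unres]

private lemma dominates_of_unres_empty {G : SimpleGraph V} {M : Finset (V × V)} {D : Finset V}
    (hadj : ∀ p ∈ M, G.Adj p.1 p.2)
    (hperf : ∀ v : V, ∃ p ∈ M, v = p.1 ∨ v = p.2)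
    (h : unres M D = ∅) : MBD.Dominates G D := by
  intro v
  obtain ⟨p, hpM, hv⟩ := hperf v
  have hp : p.1 ∈ D ∨ p.2 ∈ D := by
    by_contra hc
    push_neg at hc
    have : p ∈ unres M D := mem_unres.2 ⟨hpM, hc.1, hc.2⟩
    simp [h] at this
  rcases hp with h1 | h2
  · refine ⟨p.1, h1, ?_⟩
    rcases hv with rfl | rfl
    · exact Or.inl rfl
    · exact Or.inr (hadj p hpM)
  · refine ⟨p.2, h2, ?_⟩
    rcases hv with rfl | rfl
    · exact Or.inr (hadj p hpM).symm
    · exact Or.inl rfl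

/-- One Dominator move along the pairing strategy: if he claims a still-free endpoint `d`
of an unresolved matching edge `p`, and every other unresolved edge is untouched by
Staller, then he wins in `k+1` moves provided the `k`-move claim holds afterwards. -/
private lemma pairing_step {G : SimpleGraph V} {M : Finset (V × V)} {k : ℕ}
    {D S : Finset V} {p : V × V} (hp : p ∈ unres M D) (d : V)
    (hd : d = p.1 ∨ d = p.2) (hdS : d ∉ S)
    (huntouched : ∀ q ∈ unres M D, q ≠ p → q.1 ∉ S ∧ q.2 ∉ S)
    (hcard : (unres M D).card ≤ k + 1)
    (IHS : ∀ D' S' : Finset V, (∀ q ∈ unres M D', q.1 ∉ S' ∧ q.2 ∉ S') →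
      (unres M D').card ≤ k → MBD.DomS G k D' S') :
    MBD.DomD G (k + 1) D S := by
  obtain ⟨hpM, hp1, hp2⟩ := mem_unres.1 hp
  have hdD : d ∉ D := by rcases hd with rfl | rfl <;> assumption
  refine MBD.DomD.move d hdD hdS (IHS (insert d D) S ?_ ?_)
  · intro q hq
    obtain ⟨hqM, hq1, hq2⟩ := mem_unres.1 hq
    have hq1' : q.1 ∉ D := fun h => hq1 (Finset.mem_insert_of_mem h)
    have hq2' : q.2 ∉ D := fun h => hq2 (Finset.mem_insert_of_mem h)
    have hqU : q ∈ unres M D := mem_unres.2 ⟨hqM, hq1', hq2'⟩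
    have hqp : q ≠ p := by
      rintro rfl
      rcases hd with rfl | rfl
      · exact hq1 (Finset.mem_insert_self _ _)
      · exact hq2 (Finset.mem_insert_self _ _)
    exact huntouched q hqU hqp
  · have hsub : unres M (insert d D) ⊆ (unres M D).erase p := by
      intro q hq
      obtain ⟨hqM, hq1, hq2⟩ := mem_unres.1 hq
      have hq1' : q.1 ∉ D := fun h => hq1 (Finset.mem_insert_of_mem h)
      have hq2' : q.2 ∉ D := fun h => hq2 (Finset.mem_insert_of_mem h)
      refine Finset.mem_erase.2 ⟨?_, mem_unres.2 ⟨hqM, hq1', hq2'⟩⟩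
      rintro rfl
      rcases hd with rfl | rfl
      · exact hq1 (Finset.mem_insert_self _ _)
      · exact hq2 (Finset.mem_insert_self _ _)
    have h1 : (unres M (insert d D)).card ≤ ((unres M D).erase p).card :=
      Finset.card_le_card hsub
    have h2 : ((unres M D).erase p).card = (unres M D).card - 1 :=
      Finset.card_erase_of_mem hp
    omega

/-- The pairing-strategy invariant propagates: main induction. -/
private lemma pairing_main {G : SimpleGraph V} {M : Finset (V × V)}
    (hadj : ∀ p ∈ M, G.Adj p.1 p.2)
    (hdisj : ∀ p ∈ M, ∀ q ∈ M, p ≠ q →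
      p.1 ≠ q.1 ∧ p.1 ≠ q.2 ∧ p.2 ≠ q.1 ∧ p.2 ≠ q.2)
    (hperf : ∀ v : V, ∃ p ∈ M, v = p.1 ∨ v = p.2) :
    ∀ k : ℕ, ∀ D S : Finset V,
      ((∀ p ∈ unres M D, p.1 ∉ S ∨ p.2 ∉ S) →
        (∀ p ∈ unres M D, ∀ q ∈ unres M D,
          (p.1 ∈ S ∨ p.2 ∈ S) → (q.1 ∈ S ∨ q.2 ∈ S) → p = q) →
        (unres M D).card ≤ k → MBD.DomD G k D S) ∧
      ((∀ p ∈ unres M D, p.1 ∉ S ∧ p.2 ∉ S) →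
        (unres M D).card ≤ k → MBD.DomS G k D S) := by
  intro k
  induction k with
  | zero =>
      intro D S
      have hwin : (unres M D).card ≤ 0 → MBD.Dominates G D := by
        intro h
        exact dominates_of_unres_empty hadj hperf (Finset.card_eq_zero.1 (Nat.le_zero.1 h))
      exact ⟨fun _ _ h => MBD.DomD.win (hwin h), fun _ h => MBD.DomS.win (hwin h)⟩
  | succ k IH =>
      have IHS : ∀ D' S' : Finset V, (∀ q ∈ unres M D', q.1 ∉ S' ∧ q.2 ∉ S') →
          (unres M D').card ≤ k → MBD.DomS G k D' S' :=
        fun D' S' => (IH D' S').2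
      have hDpart : ∀ D S : Finset V,
          (∀ p ∈ unres M D, p.1 ∉ S ∨ p.2 ∉ S) →
          (∀ p ∈ unres M D, ∀ q ∈ unres M D,
            (p.1 ∈ S ∨ p.2 ∈ S) → (q.1 ∈ S ∨ q.2 ∈ S) → p = q) →
          (unres M D).card ≤ k + 1 → MBD.DomD G (k + 1) D S := by
        intro D S h1 h2 hcard
        by_cases hU : unres M D = ∅
        · exact MBD.DomD.win (dominates_of_unres_empty hadj hperf hU)
        · by_cases hdam : ∃ q ∈ unres M D, q.1 ∈ S ∨ q.2 ∈ S
          · obtain ⟨q, hq, hqS⟩ := hdam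
            have huntouched : ∀ r ∈ unres M D, r ≠ q → r.1 ∉ S ∧ r.2 ∉ S := by
              intro r hr hrq
              constructor
              · intro h; exact hrq (h2 r hr q hq (Or.inl h) hqS)
              · intro h; exact hrq (h2 r hr q hq (Or.inr h) hqS)
            rcases hqS with hq1S | hq2S
            · have hq2 : q.2 ∉ S := by
                rcases h1 q hq with h | h
                · exact absurd hq1S h
                · exact h
              exact pairing_step hq q.2 (Or.inr rfl) hq2 huntouched hcard IHS
            · have hq1 : q.1 ∉ S := by
                rcases h1 q hq with h | h
                · exact h
                · exact absurd hq2S h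
              exact pairing_step hq q.1 (Or.inl rfl) hq1 huntouched hcard IHS
          · obtain ⟨p, hp⟩ := Finset.nonempty_iff_ne_empty.2 hU
            have hp1S : p.1 ∉ S := fun h => hdam ⟨p, hp, Or.inl h⟩
            have huntouched : ∀ r ∈ unres M D, r ≠ p → r.1 ∉ S ∧ r.2 ∉ S := by
              intro r hr _
              exact ⟨fun h => hdam ⟨r, hr, Or.inl h⟩, fun h => hdam ⟨r, hr, Or.inr h⟩⟩
            exact pairing_step hp p.1 (Or.inl rfl) hp1S huntouched hcard IHS
      refine fun D S => ⟨hDpart D S, ?_⟩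
      intro hS hcard
      by_cases hU : unres M D = ∅
      · exact MBD.DomS.win (dominates_of_unres_empty hadj hperf hU)
      · obtain ⟨p, hp⟩ := Finset.nonempty_iff_ne_empty.2 hU
        obtain ⟨hpM, hp1, _⟩ := mem_unres.1 hp
        refine MBD.DomS.move ⟨p.1, hp1, (hS p hp).1⟩ ?_
        intro v hvD hvS
        refine hDpart D (insert v S) ?_ ?_ hcard
        · intro q hq
          have hqS := hS q hq
          have hne : q.1 ≠ q.2 := (hadj q (mem_unres.1 hq).1).ne
          by_cases hqv : q.1 = v
          · refine Or.inr ?_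
            intro h
            rcases Finset.mem_insert.1 h with h' | h'
            · exact hne (hqv.trans h'.symm)
            · exact hqS.2 h'
          · refine Or.inl ?_
            intro h
            rcases Finset.mem_insert.1 h with h' | h'
            · exact hqv h'
            · exact hqS.1 h'
        · intro q hq r hr htq htr
          have hqv : q.1 = v ∨ q.2 = v := by
            rcases htq with h | h
            · rcases Finset.mem_insert.1 h with h' | h'
              · exact Or.inl h'
              · exact absurd h' (hS q hq).1
            · rcases Finset.mem_insert.1 h with h' | h'
              · exact Or.inr h'
              · exact absurd h' (hS q hq).2
          have hrv : r.1 = v ∨ r.2 = v := by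
            rcases htr with h | h
            · rcases Finset.mem_insert.1 h with h' | h'
              · exact Or.inl h'
              · exact absurd h' (hS r hr).1
            · rcases Finset.mem_insert.1 h with h' | h'
              · exact Or.inr h'
              · exact absurd h' (hS r hr).2
          by_contra hne
          have hd := hdisj q (mem_unres.1 hq).1 r (mem_unres.1 hr).1 hne
          rcases hqv with h | h <;> rcases hrv with h' | h'
          · exact hd.1 (h.trans h'.symm)
          · exact hd.2.1 (h.trans h'.symm)
          · exact hd.2.2.1 (h.trans h'.symm)
          · exact hd.2.2.2 (h.trans h'.symm)

end PairingAux

/-- If `G` admits a perfect matching `M` (given as a finset of adjacent pairs, pairwise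
vertex-disjoint, covering every vertex), then Dominator wins both the D-game and the
S-game on `G`, in each case using at most `|M|` moves. -/
theorem stmt_2 {V : Type*} [Fintype V] [DecidableEq V] (G : SimpleGraph V)
    (M : Finset (V × V))
    (hadj : ∀ p ∈ M, G.Adj p.1 p.2)
    (hdisj : ∀ p ∈ M, ∀ q ∈ M, p ≠ q →
      p.1 ≠ q.1 ∧ p.1 ≠ q.2 ∧ p.2 ≠ q.1 ∧ p.2 ≠ q.2)
    (hperf : ∀ v : V, ∃ p ∈ M, v = p.1 ∨ v = p.2) :
    MBD.DomD G M.card ∅ ∅ ∧ MBD.DomS G M.card ∅ ∅ := by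
  have hU : unres M (∅ : Finset V) = M := by
    simp [unres]
  have h := pairing_main hadj hdisj hperf M.card ∅ ∅
  have hcard : (unres M (∅ : Finset V)).card ≤ M.card := by rw [hU]
  refine ⟨h.1 ?_ ?_ hcard, h.2 ?_ hcard⟩
  · intro p _; exact Or.inl (Finset.notMem_empty _)
  · intro p _ q _ hpS _
    rcases hpS with h' | h' <;> exact absurd h' (Finset.notMem_empty _)
  · intro p _; exact ⟨Finset.notMem_empty _, Finset.notMem_empty _⟩
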